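/- Transfer principle: Let A be a symmetric p×p real matrix with nonnegative diagonal entries. Let d ∈ {2, …, p} and suppose that for every subset J ⊆ {1,…,p} with |J| = d and every u ∈ ℝ^p one has u_J^T A u_J ≥ 0, where u_J is u with coordinates outside J set to zero. Then for all u ∈ ℝ^p, u^T A u ≥ − (max_j A_{jj}) · ‖u‖₁² / (d−1). -/

import Mathlib

open Matrix BigOperators

namespace TransferAux

variable {p : ℕ} (π s : Fin p → ℝ)

lemma sum_split {n : ℕ} (g : (Fin (n + 1) → Fin p) → ℝ) :
    ∑ k : Fin (n + 1) → Fin p, g k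
      = ∑ a : Fin p, ∑ k : Fin n → Fin p, g (Fin.cons a k) := by
  rw [← (Fin.consEquiv (fun _ : Fin (n + 1) => Fin p)).sum_comp g, Fintype.sum_prod_type]
  rfl

lemma sumP (hπ1 : ∑ i, π i = 1) : ∀ n, ∑ k : Fin n → Fin p, ∏ r, π (k r) = 1 := by
  intro n
  induction n with
  | zero => simp
  | succ n ih =>
    rw [sum_split]
    simp only [Fin.prod_univ_succ, Fin.cons_zero, Fin.cons_succ]
    calc ∑ a : Fin p, ∑ k : Fin n → Fin p, π a * ∏ r, π (k r)
        = ∑ a : Fin p, π a * ∑ k : Fin n → Fin p, ∏ r, π (k r) := by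
          simp [Finset.mul_sum]
      _ = 1 := by simp [ih, hπ1]

lemma marg (hπ1 : ∑ i, π i = 1) (f : Fin p → ℝ) :
    ∀ n (t : Fin n),
      ∑ k : Fin n → Fin p, (∏ r, π (k r)) * f (k t) = ∑ i, π i * f i := by
  intro n
  induction n with
  | zero => exact fun t => t.elim0
  | succ n ih =>
    intro t
    rw [sum_split]
    induction t using Fin.cases with
    | zero =>
      simp only [Fin.prod_univ_succ, Fin.cons_zero, Fin.cons_succ]
      calc ∑ a : Fin p, ∑ k : Fin n → Fin p, (π a * ∏ r, π (k r)) * f a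
          = ∑ a : Fin p, (π a * f a) * ∑ k : Fin n → Fin p, ∏ r, π (k r) := by
            refine Finset.sum_congr rfl fun a _ => ?_
            rw [Finset.mul_sum]
            exact Finset.sum_congr rfl fun k _ => by ring
        _ = ∑ i, π i * f i := by simp [sumP π hπ1 n]
    | succ t =>
      simp only [Fin.prod_univ_succ, Fin.cons_zero, Fin.cons_succ]
      calc ∑ a : Fin p, ∑ k : Fin n → Fin p, (π a * ∏ r, π (k r)) * f (k t)
          = ∑ a : Fin p, π a * ∑ k : Fin n → Fin p, (∏ r, π (k r)) * f (k t) := by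
            refine Finset.sum_congr rfl fun a _ => ?_
            rw [Finset.mul_sum]
            exact Finset.sum_congr rfl fun k _ => by ring
        _ = ∑ a : Fin p, π a * ∑ i, π i * f i := by simp [ih]
        _ = ∑ i, π i * f i := by rw [← Finset.sum_mul, hπ1, one_mul]

lemma sumPW (hπ1 : ∑ i, π i = 1) (n : ℕ) (j : Fin p) :
    ∑ k : Fin n → Fin p, (∏ r, π (k r)) * (∑ t, if k t = j then s j else 0)
      = (n : ℝ) * (π j * s j) := by
  calc ∑ k : Fin n → Fin p, (∏ r, π (k r)) * (∑ t, if k t = j then s j else 0)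
      = ∑ k : Fin n → Fin p, ∑ t : Fin n,
          (∏ r, π (k r)) * (if k t = j then s j else 0) := by
        simp [Finset.mul_sum]
    _ = ∑ t : Fin n, ∑ k : Fin n → Fin p,
          (∏ r, π (k r)) * ((fun i => if i = j then s j else 0) (k t)) :=
        Finset.sum_comm
    _ = ∑ t : Fin n, ∑ i, π i * (if i = j then s j else 0) := by
        refine Finset.sum_congr rfl fun t _ => marg π hπ1 (fun i => if i = j then s j else 0) n t
    _ = (n : ℝ) * (π j * s j) := by
        simp [mul_ite, Finset.sum_ite_eq', mul_comm]

variable (A : Matrix (Fin p) (Fin p) ℝ)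

lemma quad (hπ1 : ∑ i, π i = 1) (hs : ∀ i, s i * s i = 1) :
    ∀ n : ℕ,
      ∑ k : Fin n → Fin p, (∏ r, π (k r)) *
          ((fun i => ∑ t, if k t = i then s i else 0) ⬝ᵥ
            A *ᵥ (fun i => ∑ t, if k t = i then s i else 0))
        = ((n : ℝ) * ((n : ℝ) - 1)) *
            ((fun i => π i * s i) ⬝ᵥ A *ᵥ (fun i => π i * s i))
          + (n : ℝ) * ∑ i, π i * A i i := by
  have hQ : (fun i => π i * s i) ⬝ᵥ A *ᵥ (fun i => π i * s i)
      = ∑ a, ∑ j, (π a * s a) * A a j * (π j * s j) := by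
    simp only [dotProduct, mulVec, Finset.mul_sum]
    exact Finset.sum_congr rfl fun a _ => Finset.sum_congr rfl fun j _ => by ring
  intro n
  induction n with
  | zero =>
    have : (fun i : Fin p => ∑ t : Fin 0, if (Fin.elim0 : Fin 0 → Fin p) t = i then s i else 0)
        = fun _ => (0 : ℝ) := by funext i; simp
    simp [dotProduct, mulVec]
  | succ n ih =>
    rw [sum_split]
    have hw : ∀ (a : Fin p) (k : Fin n → Fin p),
        (fun i => ∑ t : Fin (n + 1), if (Fin.cons a k : Fin _ → Fin p) t = i then s i else 0)
          = (fun i => (if a = i then s i else 0)) + (fun i => ∑ t : Fin n, if k t = i then s i else 0) := by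
      intro a k
      funext i
      simp [Fin.sum_univ_succ]
    have hEE : ∀ a : Fin p,
        (fun i => if a = i then s i else 0) ⬝ᵥ A *ᵥ (fun i => if a = i then s i else 0)
          = s a * (A a a * s a) := by
      intro a
      simp [dotProduct, mulVec, mul_ite, ite_mul, Finset.sum_ite_eq, Finset.sum_ite_eq']
    have hEW : ∀ (a : Fin p) (W : Fin p → ℝ),
        (fun i => if a = i then s i else 0) ⬝ᵥ A *ᵥ W = s a * ∑ j, A a j * W j := by
      intro a W
      simp [dotProduct, mulVec, ite_mul, Finset.sum_ite_eq]
    have hWE : ∀ (W : Fin p → ℝ) (a : Fin p),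
        W ⬝ᵥ A *ᵥ (fun i => if a = i then s i else 0) = ∑ i, W i * (A i a * s a) := by
      intro W a
      simp [dotProduct, mulVec, mul_ite, Finset.sum_ite_eq]
    -- expand each summand
    have hexp : ∀ (a : Fin p) (k : Fin n → Fin p),
        (∏ r, π ((Fin.cons a k : Fin _ → Fin p) r)) *
            ((fun i => ∑ t : Fin (n + 1), if (Fin.cons a k : Fin _ → Fin p) t = i then s i else 0) ⬝ᵥ
              A *ᵥ (fun i => ∑ t : Fin (n + 1), if (Fin.cons a k : Fin _ → Fin p) t = i then s i else 0))
          = (π a * ∏ r, π (k r)) *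
              ((s a * (A a a * s a))
               + (s a * ∑ j, A a j * (∑ t : Fin n, if k t = j then s j else 0))
               + (∑ i, (∑ t : Fin n, if k t = i then s i else 0) * (A i a * s a))
               + ((fun i => ∑ t : Fin n, if k t = i then s i else 0) ⬝ᵥ
                    A *ᵥ (fun i => ∑ t : Fin n, if k t = i then s i else 0))) := by
      intro a k
      rw [hw a k, Fin.prod_univ_succ]
      simp only [Fin.cons_zero, Fin.cons_succ]
      rw [Matrix.mulVec_add, dotProduct_add, add_dotProduct, add_dotProduct,
        hEE a, hEW a, hWE _ a]
      ring
    simp only [hexp]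
    -- now split the sum into four parts
    have hsplit : ∀ a : Fin p,
        ∑ k : Fin n → Fin p, (π a * ∏ r, π (k r)) *
            ((s a * (A a a * s a))
             + (s a * ∑ j, A a j * (∑ t : Fin n, if k t = j then s j else 0))
             + (∑ i, (∑ t : Fin n, if k t = i then s i else 0) * (A i a * s a))
             + ((fun i => ∑ t : Fin n, if k t = i then s i else 0) ⬝ᵥ
                  A *ᵥ (fun i => ∑ t : Fin n, if k t = i then s i else 0)))
          = π a * (s a * (A a a * s a))
            + π a * s a * ∑ j, A a j * ((n : ℝ) * (π j * s j))
            + π a * ∑ i, ((n : ℝ) * (π i * s i)) * (A i a * s a)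
            + π a * (((n : ℝ) * ((n : ℝ) - 1)) *
                ((fun i => π i * s i) ⬝ᵥ A *ᵥ (fun i => π i * s i))
                + (n : ℝ) * ∑ i, π i * A i i) := by
      intro a
      simp only [mul_add, Finset.sum_add_distrib]
      congr 1
      · congr 1
        · congr 1
          · -- term 1
            calc ∑ k : Fin n → Fin p, (π a * ∏ r, π (k r)) * (s a * (A a a * s a))
                = (π a * (s a * (A a a * s a))) * ∑ k : Fin n → Fin p, ∏ r, π (k r) := by
                  rw [Finset.mul_sum]
                  exact Finset.sum_congr rfl fun k _ => by ring
              _ = π a * (s a * (A a a * s a)) := by rw [sumP π hπ1 n, mul_one]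
          · -- term 2
            calc ∑ k : Fin n → Fin p, (π a * ∏ r, π (k r)) *
                  (s a * ∑ j, A a j * (∑ t : Fin n, if k t = j then s j else 0))
                = ∑ k : Fin n → Fin p, ∑ j, (π a * s a) * (A a j *
                    ((∏ r, π (k r)) * (∑ t : Fin n, if k t = j then s j else 0))) := by
                  refine Finset.sum_congr rfl fun k _ => ?_
                  rw [Finset.mul_sum, Finset.mul_sum]
                  exact Finset.sum_congr rfl fun j _ => by ring
              _ = ∑ j, ∑ k : Fin n → Fin p, (π a * s a) * (A a j *
                    ((∏ r, π (k r)) * (∑ t : Fin n, if k t = j then s j else 0))) :=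
                  Finset.sum_comm
              _ = ∑ j, (π a * s a) * (A a j * ((n : ℝ) * (π j * s j))) := by
                  refine Finset.sum_congr rfl fun j _ => ?_
                  rw [← Finset.mul_sum, ← Finset.mul_sum, sumPW π s hπ1 n j]
              _ = π a * s a * ∑ j, A a j * ((n : ℝ) * (π j * s j)) := by
                  rw [Finset.mul_sum]
          -- term 3
        · calc ∑ k : Fin n → Fin p, (π a * ∏ r, π (k r)) *
                (∑ i, (∑ t : Fin n, if k t = i then s i else 0) * (A i a * s a))
              = ∑ k : Fin n → Fin p, ∑ i, π a * ((A i a * s a) *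
                  ((∏ r, π (k r)) * (∑ t : Fin n, if k t = i then s i else 0))) := by
                refine Finset.sum_congr rfl fun k _ => ?_
                rw [Finset.mul_sum]
                exact Finset.sum_congr rfl fun i _ => by ring
            _ = ∑ i, ∑ k : Fin n → Fin p, π a * ((A i a * s a) *
                  ((∏ r, π (k r)) * (∑ t : Fin n, if k t = i then s i else 0))) :=
                Finset.sum_comm
            _ = ∑ i, π a * ((A i a * s a) * ((n : ℝ) * (π i * s i))) := by
                refine Finset.sum_congr rfl fun i _ => ?_
                rw [← Finset.mul_sum, ← Finset.mul_sum, sumPW π s hπ1 n i]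
            _ = π a * ∑ i, ((n : ℝ) * (π i * s i)) * (A i a * s a) := by
                rw [Finset.mul_sum]
                exact Finset.sum_congr rfl fun i _ => by ring
      · -- term 4
        calc ∑ k : Fin n → Fin p, (π a * ∏ r, π (k r)) *
              ((fun i => ∑ t : Fin n, if k t = i then s i else 0) ⬝ᵥ
                A *ᵥ (fun i => ∑ t : Fin n, if k t = i then s i else 0))
            = π a * ∑ k : Fin n → Fin p, (∏ r, π (k r)) *
              ((fun i => ∑ t : Fin n, if k t = i then s i else 0) ⬝ᵥ
                A *ᵥ (fun i => ∑ t : Fin n, if k t = i then s i else 0)) := by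
              rw [Finset.mul_sum]
              exact Finset.sum_congr rfl fun k _ => by ring
          _ = _ := by rw [ih]; ring
    simp only [hsplit]
    -- final summation over a
    have hD : ∑ a, π a * (s a * (A a a * s a)) = ∑ a, π a * A a a := by
      refine Finset.sum_congr rfl fun a _ => ?_
      calc π a * (s a * (A a a * s a)) = (s a * s a) * (π a * A a a) := by ring
        _ = π a * A a a := by rw [hs a, one_mul]
    have h2 : ∑ a, π a * s a * ∑ j, A a j * ((n : ℝ) * (π j * s j))
        = (n : ℝ) * ((fun i => π i * s i) ⬝ᵥ A *ᵥ (fun i => π i * s i)) := by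
      rw [hQ, Finset.mul_sum]
      refine Finset.sum_congr rfl fun a _ => ?_
      rw [Finset.mul_sum, Finset.mul_sum]
      exact Finset.sum_congr rfl fun j _ => by ring
    have h3 : ∑ a, π a * ∑ i, ((n : ℝ) * (π i * s i)) * (A i a * s a)
        = (n : ℝ) * ((fun i => π i * s i) ⬝ᵥ A *ᵥ (fun i => π i * s i)) := by
      rw [hQ, Finset.mul_sum]
      rw [show ∑ a, π a * ∑ i, ((n : ℝ) * (π i * s i)) * (A i a * s a)
          = ∑ a, ∑ i, π a * (((n : ℝ) * (π i * s i)) * (A i a * s a)) from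
        Finset.sum_congr rfl fun a _ => by rw [Finset.mul_sum]]
      rw [Finset.sum_comm]
      refine Finset.sum_congr rfl fun i _ => ?_
      rw [Finset.mul_sum]
      exact Finset.sum_congr rfl fun a _ => by ring
    have h4 : ∑ a, π a * (((n : ℝ) * ((n : ℝ) - 1)) *
          ((fun i => π i * s i) ⬝ᵥ A *ᵥ (fun i => π i * s i))
          + (n : ℝ) * ∑ i, π i * A i i)
        = ((n : ℝ) * ((n : ℝ) - 1)) *
            ((fun i => π i * s i) ⬝ᵥ A *ᵥ (fun i => π i * s i))
          + (n : ℝ) * ∑ i, π i * A i i := by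
      rw [← Finset.sum_mul, hπ1, one_mul]
    simp only [Finset.sum_add_distrib, hD, h2, h3, h4]
    push_cast
    ring

end TransferAux

theorem transfer_principle
    {p : ℕ} (A : Matrix (Fin p) (Fin p) ℝ) (hA : A.IsSymm)
    (hdiag : ∀ j, 0 ≤ A j j)
    (d : ℕ) (hd : 2 ≤ d) (hdp : d ≤ p)
    (hpos : ∀ J : Finset (Fin p), J.card = d → ∀ u : Fin p → ℝ,
      0 ≤ (fun i => if i ∈ J then u i else 0) ⬝ᵥ
            A *ᵥ (fun i => if i ∈ J then u i else 0)) :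
    ∀ u : Fin p → ℝ,
      u ⬝ᵥ A *ᵥ u ≥ -((⨆ j, A j j) * (∑ j, |u j|) ^ 2 / ((d : ℝ) - 1)) := by
  intro u
  have hp : 0 < p := lt_of_lt_of_le (by omega) hdp
  haveI : Nonempty (Fin p) := ⟨⟨0, hp⟩⟩
  set T : ℝ := ∑ j, |u j| with hT
  by_cases hT0 : T = 0
  · have hu0 : ∀ j, u j = 0 := by
      intro j
      have := (Finset.sum_eq_zero_iff_of_nonneg (fun i _ => abs_nonneg (u i))).mp hT0 j
        (Finset.mem_univ j)
      exact abs_eq_zero.mp this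
    have : u = fun _ => 0 := funext hu0
    subst this
    simp [hT0, dotProduct, mulVec, ge_iff_le]
  · have hTpos : 0 < T := lt_of_le_of_ne (Finset.sum_nonneg fun i _ => abs_nonneg _) (Ne.symm hT0)
    set π : Fin p → ℝ := fun i => |u i| / T with hπdef
    set s : Fin p → ℝ := fun i => if u i < 0 then -1 else 1 with hsdef
    have hπ1 : ∑ i, π i = 1 := by
      rw [hπdef]
      simp only
      rw [← Finset.sum_div, ← hT, div_self hT0]
    have hπ0 : ∀ i, 0 ≤ π i := fun i => div_nonneg (abs_nonneg _) hTpos.le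
    have hs1 : ∀ i, s i * s i = 1 := by
      intro i
      rw [hsdef]
      by_cases h : u i < 0 <;> simp [h]
    have hv : ∀ i, π i * s i = u i / T := by
      intro i
      rw [hπdef, hsdef]
      by_cases h : u i < 0
      · simp only [h, if_true]
        rw [abs_of_neg h]; ring
      · simp only [h, if_false]
        rw [abs_of_nonneg (not_lt.mp h)]; ring
    -- nonnegativity of each term of the expectation
    have hterm : ∀ k : Fin d → Fin p,
        0 ≤ (∏ r, π (k r)) *
          ((fun i => ∑ t, if k t = i then s i else 0) ⬝ᵥ
            A *ᵥ (fun i => ∑ t, if k t = i then s i else 0)) := by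
      intro k
      apply mul_nonneg (Finset.prod_nonneg fun r _ => hπ0 _)
      -- extend the support of the sparse vector to a set of size exactly d
      obtain ⟨J, hJ1, -, hJcard⟩ :=
        Finset.exists_subsuperset_card_eq (Finset.subset_univ (Finset.image k Finset.univ))
          (by simpa using (Finset.card_image_le : (Finset.univ.image k).card ≤ _)) (by simpa using hdp)
      have hrest : (fun i => if i ∈ J then (∑ t, if k t = i then s i else 0) else 0)
          = fun i => ∑ t, if k t = i then s i else 0 := by
        funext i
        by_cases hi : i ∈ J
        · simp [hi]
        · simp only [hi, if_false]
          symm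
          apply Finset.sum_eq_zero
          intro t _
          have : k t ≠ i := by
            intro h
            exact hi (hJ1 (Finset.mem_image.mpr ⟨t, Finset.mem_univ t, h⟩))
          simp [this]
      have := hpos J hJcard (fun i => ∑ t, if k t = i then s i else 0)
      rwa [hrest] at this
    have hE := TransferAux.quad π s A hπ1 hs1 d
    have hE0 : 0 ≤ ((d : ℝ) * ((d : ℝ) - 1)) *
        ((fun i => π i * s i) ⬝ᵥ A *ᵥ (fun i => π i * s i))
        + (d : ℝ) * ∑ i, π i * A i i := by
      rw [← hE]
      exact Finset.sum_nonneg fun k _ => hterm k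
    set m : ℝ := ⨆ j, A j j with hm
    have hDm : ∑ i, π i * A i i ≤ m := by
      calc ∑ i, π i * A i i ≤ ∑ i, π i * m := by
            refine Finset.sum_le_sum fun i _ => ?_
            exact mul_le_mul_of_nonneg_left (le_ciSup (f := fun j => A j j) (Set.Finite.bddAbove (Set.finite_range _)) i)
              (hπ0 i)
        _ = m := by rw [← Finset.sum_mul, hπ1, one_mul]
    -- relate Q to u
    set Q : ℝ := (fun i => π i * s i) ⬝ᵥ A *ᵥ (fun i => π i * s i) with hQdef
    have hQu : Q = (u ⬝ᵥ A *ᵥ u) / (T * T) := by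
      rw [hQdef]
      have hvv : (fun i => π i * s i) = (T⁻¹) • u := by
        funext i
        rw [hv i]
        simp [div_eq_inv_mul, Pi.smul_apply, smul_eq_mul]
      rw [hvv, Matrix.mulVec_smul, dotProduct_smul, smul_dotProduct]
      field_simp
      simp only [smul_eq_mul]
      field_simp
    have hd1 : (1 : ℝ) ≤ (d : ℝ) - 1 := by
      have : (2 : ℝ) ≤ (d : ℝ) := by exact_mod_cast hd
      linarith
    have hdpos : (0 : ℝ) < (d : ℝ) := by positivity
    have key : -m ≤ ((d : ℝ) - 1) * Q := by nlinarith [hE0, hDm]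
    have huQ : u ⬝ᵥ A *ᵥ u = (T * T) * Q := by
      rw [hQu]
      field_simp
    rw [ge_iff_le, huQ,
      show -(m * T ^ 2 / ((d : ℝ) - 1)) = (-m * T ^ 2) / ((d : ℝ) - 1) by ring,
      div_le_iff₀ (by linarith : (0 : ℝ) < (d : ℝ) - 1)]
    nlinarith [mul_le_mul_of_nonneg_right key (mul_nonneg hTpos.le hTpos.le)]
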